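/- Conversely to reachability, every twist vector in the orbit of (0,0,0) under the group generated by σ₁, σ₂, σ₃ and their inverses is orientable: for any word w in these maps, w·(0,0,0) has all three entries in ℤ or all three in ℤ + 1/2. Hence a braided 3-belt admits a braid-only form (trivial twisting) if and only if it is orientable. -/

import Mathlib

/-- The action of a circular braid generator (`b = true`) or its inverse (`b = false`)
on twist vectors in ℚ³. -/
def gen : Fin 3 × Bool → (ℚ × ℚ × ℚ → ℚ × ℚ × ℚ)
  | (0, true)  => fun v => (v.2.1 + 1/2, v.1 + 1/2, v.2.2 - 1/2)
  | (1, true)  => fun v => (v.1 - 1/2, v.2.2 + 1/2, v.2.1 + 1/2)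
  | (2, true)  => fun v => (v.2.2 + 1/2, v.2.1 - 1/2, v.1 + 1/2)
  | (0, false) => fun v => (v.2.1 - 1/2, v.1 - 1/2, v.2.2 + 1/2)
  | (1, false) => fun v => (v.1 + 1/2, v.2.2 - 1/2, v.2.1 - 1/2)
  | (2, false) => fun v => (v.2.2 - 1/2, v.2.1 + 1/2, v.1 - 1/2)

/-- Apply a word (list of generators and inverses, rightmost letter acting first). -/
def applyWord (w : List (Fin 3 × Bool)) (v : ℚ × ℚ × ℚ) : ℚ × ℚ × ℚ :=
  w.foldr (fun g u => gen g u) v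

/-- `x` is an integer. -/
def IsInt (x : ℚ) : Prop := ∃ n : ℤ, x = n

/-- `x` is a half-odd-integer, i.e. an element of ℤ + 1/2. -/
def IsHalfOdd (x : ℚ) : Prop := ∃ n : ℤ, x = n + 1/2

/-- A twist vector is orientable if its entries do not mix integers and
half-odd-integers. -/
def Orientable (v : ℚ × ℚ × ℚ) : Prop :=
  (IsInt v.1 ∧ IsInt v.2.1 ∧ IsInt v.2.2) ∨
  (IsHalfOdd v.1 ∧ IsHalfOdd v.2.1 ∧ IsHalfOdd v.2.2)

-- helpers
lemma int_add_half {x : ℚ} (h : IsInt x) : IsHalfOdd (x + 1/2) := by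
  obtain ⟨n, rfl⟩ := h; exact ⟨n, rfl⟩
lemma int_sub_half {x : ℚ} (h : IsInt x) : IsHalfOdd (x - 1/2) := by
  obtain ⟨n, rfl⟩ := h; exact ⟨n - 1, by push_cast; ring⟩
lemma half_add_half {x : ℚ} (h : IsHalfOdd x) : IsInt (x + 1/2) := by
  obtain ⟨n, rfl⟩ := h; exact ⟨n + 1, by push_cast; ring⟩
lemma half_sub_half {x : ℚ} (h : IsHalfOdd x) : IsInt (x - 1/2) := by
  obtain ⟨n, rfl⟩ := h; exact ⟨n, by push_cast; ring⟩

lemma gen_orient (g : Fin 3 × Bool) (v : ℚ × ℚ × ℚ) (h : Orientable v) :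
    Orientable (gen g v) := by
  obtain ⟨i, b⟩ := g
  obtain ⟨x, y, z⟩ := v
  fin_cases i <;> cases b <;> simp only [gen] <;>
    rcases h with ⟨hx, hy, hz⟩ | ⟨hx, hy, hz⟩ <;>
    first
      | (refine Or.inl ⟨?_, ?_, ?_⟩ <;>
          solve_by_elim [int_add_half, int_sub_half, half_add_half, half_sub_half])
      | (refine Or.inr ⟨?_, ?_, ?_⟩ <;>
          solve_by_elim [int_add_half, int_sub_half, half_add_half, half_sub_half])

def Reach (v : ℚ × ℚ × ℚ) : Prop := ∃ w, applyWord w (0, 0, 0) = v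

lemma reach_gen {v : ℚ × ℚ × ℚ} (g : Fin 3 × Bool) (h : Reach v) : Reach (gen g v) := by
  obtain ⟨w, hw⟩ := h
  exact ⟨g :: w, by rw [show applyWord (g :: w) (0,0,0) = gen g (applyWord w (0,0,0)) from rfl, hw]⟩

lemma reach_t1 (n : ℤ) {x y z : ℚ} (h : Reach (x, y, z)) : Reach (x + n, y + n, z - n) := by
  induction n using Int.induction_on with
  | zero => simpa using h
  | succ k ih =>
      have h2 := reach_gen (0, true) (reach_gen (0, true) ih)
      have e : gen (0,true) (gen (0,true) ((x + ((k:ℤ):ℚ)), y + ((k:ℤ):ℚ), z - ((k:ℤ):ℚ)))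
          = (x + (k+1 : ℤ), y + (k+1 : ℤ), z - (k+1 : ℤ)) := by
        simp only [gen, Prod.mk.injEq]; push_cast; refine ⟨by ring, by ring, by ring⟩
      rwa [e] at h2
  | pred k ih =>
      have h2 := reach_gen (0, false) (reach_gen (0, false) ih)
      have e : gen (0,false) (gen (0,false) ((x + (-k : ℤ) : ℚ), y + (-k : ℤ), z - (-k : ℤ)))
          = (x + (-k-1 : ℤ), y + (-k-1 : ℤ), z - (-k-1 : ℤ)) := by
        simp only [gen, Prod.mk.injEq]; push_cast; refine ⟨by ring, by ring, by ring⟩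
      rwa [e] at h2

lemma reach_t2 (n : ℤ) {x y z : ℚ} (h : Reach (x, y, z)) : Reach (x - n, y + n, z + n) := by
  induction n using Int.induction_on with
  | zero => simpa using h
  | succ k ih =>
      have h2 := reach_gen (1, true) (reach_gen (1, true) ih)
      have e : gen (1,true) (gen (1,true) ((x - ((k:ℤ):ℚ)), y + ((k:ℤ):ℚ), z + ((k:ℤ):ℚ)))
          = (x - (k+1 : ℤ), y + (k+1 : ℤ), z + (k+1 : ℤ)) := by
        simp only [gen, Prod.mk.injEq]; push_cast; refine ⟨by ring, by ring, by ring⟩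
      rwa [e] at h2
  | pred k ih =>
      have h2 := reach_gen (1, false) (reach_gen (1, false) ih)
      have e : gen (1,false) (gen (1,false) ((x - (-k : ℤ) : ℚ), y + (-k : ℤ), z + (-k : ℤ)))
          = (x - (-k-1 : ℤ), y + (-k-1 : ℤ), z + (-k-1 : ℤ)) := by
        simp only [gen, Prod.mk.injEq]; push_cast; refine ⟨by ring, by ring, by ring⟩
      rwa [e] at h2

lemma reach_t3 (n : ℤ) {x y z : ℚ} (h : Reach (x, y, z)) : Reach (x + n, y - n, z + n) := by
  induction n using Int.induction_on with
  | zero => simpa using h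
  | succ k ih =>
      have h2 := reach_gen (2, true) (reach_gen (2, true) ih)
      have e : gen (2,true) (gen (2,true) ((x + ((k:ℤ):ℚ)), y - ((k:ℤ):ℚ), z + ((k:ℤ):ℚ)))
          = (x + (k+1 : ℤ), y - (k+1 : ℤ), z + (k+1 : ℤ)) := by
        simp only [gen, Prod.mk.injEq]; push_cast; refine ⟨by ring, by ring, by ring⟩
      rwa [e] at h2
  | pred k ih =>
      have h2 := reach_gen (2, false) (reach_gen (2, false) ih)
      have e : gen (2,false) (gen (2,false) ((x + (-k : ℤ) : ℚ), y - (-k : ℤ), z + (-k : ℤ)))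
          = (x + (-k-1 : ℤ), y - (-k-1 : ℤ), z + (-k-1 : ℤ)) := by
        simp only [gen, Prod.mk.injEq]; push_cast; refine ⟨by ring, by ring, by ring⟩
      rwa [e] at h2

/-- Translate a reachable point by any integer vector with all coordinates of
the same parity (here encoded by evenness of the pairwise sums). -/
lemma reach_lattice {x y z : ℚ} (s t u : ℤ) (hst : Even (s + t)) (htu : Even (t + u))
    (h : Reach (x, y, z)) : Reach (x + s, y + t, z + u) := by
  obtain ⟨a, ha⟩ := hst
  obtain ⟨b, hb⟩ := htu
  have h1 := reach_t1 a h
  have h2 := reach_t2 b h1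
  have h3 := reach_t3 (a + b - t) h2
  have ha' : (s : ℚ) + t = a + a := by exact_mod_cast ha
  have hb' : (t : ℚ) + u = b + b := by exact_mod_cast hb
  have e : (x + a - b + (a + b - t : ℤ), y + a + b - (a + b - t : ℤ),
      z - a + b + (a + b - t : ℤ)) = ((x + s : ℚ), y + t, z + u) := by
    simp only [Prod.mk.injEq]; push_cast
    refine ⟨by linarith, by linarith, by linarith⟩
  rwa [e] at h3

lemma reach_congr {v w : ℚ × ℚ × ℚ} (h : Reach v) (e : v = w) : Reach w := e ▸ h

lemma odd_shift {a b : ℤ} (h : Odd (a + b)) : Even (a + (b - 1)) := by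
  obtain ⟨k, hk⟩ := h; exact ⟨k, by omega⟩
lemma odd_shift' {a b : ℤ} (h : Odd (a + b)) : Even (a + 1 + b) := by
  obtain ⟨k, hk⟩ := h; exact ⟨k + 1, by omega⟩

lemma reach_of_orientable (v : ℚ × ℚ × ℚ) (h : Orientable v) : Reach v := by
  obtain ⟨x, y, z⟩ := v
  rcases h with ⟨⟨p, hp⟩, ⟨q, hq⟩, ⟨r, hr⟩⟩ | ⟨⟨p, hp⟩, ⟨q, hq⟩, ⟨r, hr⟩⟩ <;>
    subst hp hq hr
  · -- integer case
    have h0 : Reach ((0 : ℚ), 0, 0) := ⟨[], rfl⟩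
    rcases Int.even_or_odd (p + q) with h1 | h1 <;> rcases Int.even_or_odd (q + r) with h2 | h2
    · refine reach_congr (reach_lattice p q r h1 h2 h0) ?_
      simp
    · -- rep (0,0,1) = σ₂ σ₁ · 0
      have hrep : Reach ((0 : ℚ), 0, 1) :=
        ⟨[(1, true), (0, true)], by norm_num [applyWord, gen]⟩
      refine reach_congr (reach_lattice p q (r - 1) h1 (odd_shift h2) hrep) ?_
      simp only [Prod.mk.injEq]; push_cast; refine ⟨by ring, by ring, by ring⟩
    · -- rep (1,0,0) = σ₁ σ₂ · 0
      have hrep : Reach ((1 : ℚ), 0, 0) :=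
        ⟨[(0, true), (1, true)], by norm_num [applyWord, gen]⟩
      refine reach_congr (reach_lattice (p - 1) q r ?_ h2 hrep) ?_
      · obtain ⟨k, hk⟩ := h1; exact ⟨k, by omega⟩
      · simp only [Prod.mk.injEq]; push_cast; refine ⟨by ring, by ring, by ring⟩
    · -- rep (0,1,0) = σ₁ σ₃ · 0
      have hrep : Reach ((0 : ℚ), 1, 0) :=
        ⟨[(0, true), (2, true)], by norm_num [applyWord, gen]⟩
      refine reach_congr (reach_lattice p (q - 1) r (odd_shift h1) ?_ hrep) ?_
      · obtain ⟨k, hk⟩ := h2; exact ⟨k, by omega⟩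
      · simp only [Prod.mk.injEq]; push_cast; refine ⟨by ring, by ring, by ring⟩
  · -- half-odd case
    rcases Int.even_or_odd (p + q) with h1 | h1 <;> rcases Int.even_or_odd (q + r) with h2 | h2
    · -- rep (1/2,1/2,1/2) = σ₁ σ₂ σ₁ · 0
      have hrep : Reach ((1/2 : ℚ), 1/2, 1/2) :=
        ⟨[(0, true), (1, true), (0, true)], by norm_num [applyWord, gen]⟩
      refine reach_congr (reach_lattice p q r h1 h2 hrep) ?_
      simp only [Prod.mk.injEq]; push_cast; refine ⟨by ring, by ring, by ring⟩
    · -- rep (1/2,1/2,-1/2) = σ₁ · 0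
      have hrep : Reach ((1/2 : ℚ), 1/2, -(1/2)) :=
        ⟨[(0, true)], by norm_num [applyWord, gen]⟩
      refine reach_congr (reach_lattice p q (r + 1) h1 ?_ hrep) ?_
      · obtain ⟨k, hk⟩ := h2; exact ⟨k + 1, by omega⟩
      · simp only [Prod.mk.injEq]; push_cast; refine ⟨by ring, by ring, by ring⟩
    · -- rep (-1/2,1/2,1/2) = σ₂ · 0
      have hrep : Reach (-(1/2 : ℚ), 1/2, 1/2) :=
        ⟨[(1, true)], by norm_num [applyWord, gen]⟩
      refine reach_congr (reach_lattice (p + 1) q r (odd_shift' h1) h2 hrep) ?_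
      simp only [Prod.mk.injEq]; push_cast; refine ⟨by ring, by ring, by ring⟩
    · -- rep (1/2,-1/2,1/2) = σ₃ · 0
      have hrep : Reach ((1/2 : ℚ), -(1/2), 1/2) :=
        ⟨[(2, true)], by norm_num [applyWord, gen]⟩
      refine reach_congr (reach_lattice p (q + 1) r ?_ ?_ hrep) ?_
      · obtain ⟨k, hk⟩ := h1; exact ⟨k + 1, by omega⟩
      · obtain ⟨k, hk⟩ := h2; exact ⟨k + 1, by omega⟩
      · simp only [Prod.mk.injEq]; push_cast; refine ⟨by ring, by ring, by ring⟩


/-- Every twist vector obtained from the trivial belt by braiding alone is orientable: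
a braided 3-belt admits a braid-only form iff it is orientable. -/
theorem orbit_of_zero_is_orientable :
    (∀ w : List (Fin 3 × Bool), Orientable (applyWord w (0, 0, 0))) ∧
    (∀ v : ℚ × ℚ × ℚ,
      (∃ w : List (Fin 3 × Bool), applyWord w (0, 0, 0) = v) ↔ Orientable v) := by
  have hfwd : ∀ w : List (Fin 3 × Bool), Orientable (applyWord w (0, 0, 0)) := by
    intro w
    induction w with
    | nil => exact Or.inl ⟨⟨0, by norm_num [applyWord]⟩, ⟨0, by norm_num [applyWord]⟩, ⟨0, by norm_num [applyWord]⟩⟩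
    | cons g w ih =>
        have : applyWord (g :: w) (0,0,0) = gen g (applyWord w (0,0,0)) := rfl
        rw [this]
        exact gen_orient g _ ih
  refine ⟨hfwd, fun v => ⟨?_, ?_⟩⟩
  · rintro ⟨w, rfl⟩; exact hfwd w
  · exact reach_of_orientable v
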